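/- Let 0 < α ≤ √2 − 1 and let X be an ℕ-valued random variable satisfying the recursive distributional equation. Then for all s ∈ [0,1], G(s) = Q₊(s) = (1/2)((2−p)s + p + √(((2−p)s + p)² − 4s·exp(α(s−1)))). -/

import Mathlib

open scoped ENNReal

/-- The Poisson(α) probability mass function on ℕ. -/
noncomputable def poissonPMF (α : ℝ) (k : ℕ) : ℝ≥0∞ :=
  ENNReal.ofReal (Real.exp (-α) * α ^ k / (Nat.factorial k))

/-- The Geometric(1/2) pmf: P(N = k) = (1/2)^(k+1) for k ≥ 0. -/
noncomputable def geomHalf (k : ℕ) : ℝ≥0∞ := (1 / 2) ^ (k + 1)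

/-- The law of (X - 1)⁺ when X has law μ on ℕ. -/
noncomputable def shiftLaw (μ : ℕ → ℝ≥0∞) (k : ℕ) : ℝ≥0∞ :=
  if k = 0 then μ 0 + μ 1 else μ (k + 1)

/-- Convolution of two (sub-)pmfs on ℕ: the law of an independent sum. -/
noncomputable def convAdd (f g : ℕ → ℝ≥0∞) (k : ℕ) : ℝ≥0∞ :=
  ∑ j ∈ Finset.range (k + 1), f j * g (k - j)

/-- n-fold convolution of a pmf on ℕ: the law of a sum of n i.i.d. copies. -/
noncomputable def iterConv (f : ℕ → ℝ≥0∞) : ℕ → ℕ → ℝ≥0∞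
  | 0 => fun k => if k = 0 then 1 else 0
  | n + 1 => convAdd (iterConv f n) f

/-- μ is the law of an ℕ-valued random variable X satisfying the RDE
    X =_d P + ∑_{i=1}^N (X_i - 1)⁺, with P ~ Poisson(α), N ~ Geom(1/2),
    X_i i.i.d. with law μ, all independent. -/
def SatisfiesRDE (α : ℝ) (μ : ℕ → ℝ≥0∞) : Prop :=
  (∑' k, μ k) = 1 ∧
  ∀ k, μ k = ∑' n, geomHalf n * convAdd (poissonPMF α) (iterConv (shiftLaw μ) n) k

/-- The probability generating function G(s) = E[s^X]. -/
noncomputable def pgf (μ : ℕ → ℝ≥0∞) (s : ℝ) : ℝ := ∑' k, (μ k).toReal * s ^ k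

/-- The mean E[X] = ∑ k · P(X = k), valued in [0,∞]. -/
noncomputable def meanENN (μ : ℕ → ℝ≥0∞) : ℝ≥0∞ := ∑' k : ℕ, (k : ℝ≥0∞) * μ k

-- auxiliary: generating function in ℝ≥0∞
noncomputable def ghat (f : ℕ → ℝ≥0∞) (t : ℝ≥0∞) : ℝ≥0∞ := ∑' k, f k * t ^ k

lemma ghat_conv (f g : ℕ → ℝ≥0∞) (t : ℝ≥0∞) :
    ghat (convAdd f g) t = ghat f t * ghat g t := by
  have key : ∀ k, convAdd f g k * t ^ k
      = ∑ ij ∈ Finset.HasAntidiagonal.antidiagonal k, (f ij.1 * t ^ ij.1) * (g ij.2 * t ^ ij.2) := by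
    intro k
    rw [Finset.Nat.sum_antidiagonal_eq_sum_range_succ_mk, convAdd, Finset.sum_mul]
    refine Finset.sum_congr rfl fun j hj => ?_
    have hjk : j ≤ k := Nat.lt_succ_iff.mp (Finset.mem_range.mp hj)
    have ht : t ^ k = t ^ j * t ^ (k - j) := by
      rw [← pow_add, Nat.add_sub_cancel' hjk]
    rw [ht]; ring
  have e1 : ghat (convAdd f g) t
      = ∑' k, ∑ ij ∈ Finset.HasAntidiagonal.antidiagonal k, (f ij.1 * t ^ ij.1) * (g ij.2 * t ^ ij.2) :=
    tsum_congr key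
  rw [e1]
  have e2 : ∀ k : ℕ, ∑ ij ∈ Finset.HasAntidiagonal.antidiagonal k, (f ij.1 * t ^ ij.1) * (g ij.2 * t ^ ij.2)
      = ∑' (ij : {x // x ∈ Finset.HasAntidiagonal.antidiagonal k}),
          (f (ij : ℕ × ℕ).1 * t ^ (ij : ℕ × ℕ).1) * (g (ij : ℕ × ℕ).2 * t ^ (ij : ℕ × ℕ).2) :=
    fun k => (Finset.tsum_subtype _ _).symm
  calc ∑' k, ∑ ij ∈ Finset.HasAntidiagonal.antidiagonal k, (f ij.1 * t ^ ij.1) * (g ij.2 * t ^ ij.2)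
      = ∑' (k : ℕ) (ij : {x // x ∈ Finset.HasAntidiagonal.antidiagonal k}),
          (f (ij : ℕ × ℕ).1 * t ^ (ij : ℕ × ℕ).1) * (g (ij : ℕ × ℕ).2 * t ^ (ij : ℕ × ℕ).2) :=
        tsum_congr e2
    _ = ∑' (x : Σ k : ℕ, {ij // ij ∈ Finset.HasAntidiagonal.antidiagonal k}),
          (f (x.2 : ℕ × ℕ).1 * t ^ (x.2 : ℕ × ℕ).1) * (g (x.2 : ℕ × ℕ).2 * t ^ (x.2 : ℕ × ℕ).2) :=
        (ENNReal.tsum_sigma' (f := fun x : Σ k : ℕ, {ij // ij ∈ Finset.HasAntidiagonal.antidiagonal k} =>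
          (f (x.2 : ℕ × ℕ).1 * t ^ (x.2 : ℕ × ℕ).1) * (g (x.2 : ℕ × ℕ).2 * t ^ (x.2 : ℕ × ℕ).2))).symm
    _ = ∑' (p : ℕ × ℕ), (f p.1 * t ^ p.1) * (g p.2 * t ^ p.2) :=
        Finset.HasAntidiagonal.sigmaAntidiagonalEquivProd.tsum_eq
          (fun p : ℕ × ℕ => (f p.1 * t ^ p.1) * (g p.2 * t ^ p.2))
    _ = ∑' (a : ℕ) (b : ℕ), (f a * t ^ a) * (g b * t ^ b) :=
        ENNReal.tsum_prod (f := fun a b => (f a * t ^ a) * (g b * t ^ b))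
    _ = ghat f t * ghat g t := by
        simp_rw [ENNReal.tsum_mul_left, ENNReal.tsum_mul_right]; rfl

lemma ghat_iter (f : ℕ → ℝ≥0∞) (t : ℝ≥0∞) : ∀ n, ghat (iterConv f n) t = (ghat f t) ^ n := by
  intro n
  induction n with
  | zero =>
      rw [ghat]
      rw [tsum_eq_single 0 (fun b hb => by simp [iterConv, hb])]
      simp [iterConv]
  | succ n ih =>
      show ghat (convAdd (iterConv f n) f) t = _
      rw [ghat_conv, ih, pow_succ]

lemma geom_series_rel (x y : ℝ≥0∞) :
    2 * (∑' n, geomHalf n * (y * x ^ n)) = y + (∑' n, geomHalf n * (y * x ^ n)) * x := by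
  have hhalf : (2 : ℝ≥0∞) * (1 / 2) = 1 := by
    rw [one_div, ENNReal.mul_inv_cancel (by norm_num) (by norm_num)]
  have h1 : ∀ n : ℕ, 2 * (geomHalf n * (y * x ^ n)) = (1 / 2 : ℝ≥0∞) ^ n * (y * x ^ n) := by
    intro n
    rw [geomHalf, pow_succ]
    calc 2 * ((1/2:ℝ≥0∞) ^ n * (1/2) * (y * x ^ n))
        = (2 * (1/2)) * ((1/2:ℝ≥0∞) ^ n * (y * x ^ n)) := by ring
      _ = (1/2:ℝ≥0∞) ^ n * (y * x ^ n) := by rw [hhalf, one_mul]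
  have h2 : ∀ n : ℕ, geomHalf n * (y * x ^ n) * x = (1/2:ℝ≥0∞) ^ (n+1) * (y * x ^ (n+1)) := by
    intro n; rw [geomHalf, pow_succ]; ring
  calc 2 * (∑' n, geomHalf n * (y * x ^ n)) = ∑' n, 2 * (geomHalf n * (y * x ^ n)) :=
        ENNReal.tsum_mul_left.symm
    _ = ∑' n, (1/2:ℝ≥0∞) ^ n * (y * x ^ n) := tsum_congr h1
    _ = (1/2:ℝ≥0∞) ^ 0 * (y * x ^ 0) + ∑' n, (1/2:ℝ≥0∞) ^ (n+1) * (y * x ^ (n+1)) :=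
        tsum_eq_zero_add' ENNReal.summable
    _ = y + ∑' n, geomHalf n * (y * x ^ n) * x := by
        rw [pow_zero, pow_zero, one_mul, mul_one]
        exact congrArg (y + ·) (tsum_congr fun n => (h2 n).symm)
    _ = y + (∑' n, geomHalf n * (y * x ^ n)) * x := by rw [ENNReal.tsum_mul_right]

lemma master_eq {α : ℝ} {μ : ℕ → ℝ≥0∞} (hμ : SatisfiesRDE α μ) (t : ℝ≥0∞) :
    2 * ghat μ t = ghat (poissonPMF α) t + ghat μ t * ghat (shiftLaw μ) t := by
  set P := ghat (poissonPMF α) t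
  set x := ghat (shiftLaw μ) t
  have hG : ghat μ t = ∑' n, geomHalf n * (P * x ^ n) := by
    rw [ghat]
    calc ∑' k, μ k * t ^ k
        = ∑' k, (∑' n, geomHalf n * convAdd (poissonPMF α) (iterConv (shiftLaw μ) n) k) * t ^ k := by
          exact tsum_congr fun k => by rw [← hμ.2 k]
      _ = ∑' (k : ℕ) (n : ℕ), geomHalf n * convAdd (poissonPMF α) (iterConv (shiftLaw μ) n) k * t ^ k := by
          exact tsum_congr fun k => by rw [ENNReal.tsum_mul_right]
      _ = ∑' (n : ℕ) (k : ℕ), geomHalf n * convAdd (poissonPMF α) (iterConv (shiftLaw μ) n) k * t ^ k :=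
          ENNReal.tsum_comm
      _ = ∑' n, geomHalf n * (P * x ^ n) := by
          refine tsum_congr fun n => ?_
          have : ∑' k, geomHalf n * convAdd (poissonPMF α) (iterConv (shiftLaw μ) n) k * t ^ k
              = geomHalf n * ∑' k, convAdd (poissonPMF α) (iterConv (shiftLaw μ) n) k * t ^ k := by
            rw [← ENNReal.tsum_mul_left]
            exact tsum_congr fun k => by ring
          rw [this]
          congr 1
          rw [show (∑' k, convAdd (poissonPMF α) (iterConv (shiftLaw μ) n) k * t ^ k)
              = ghat (convAdd (poissonPMF α) (iterConv (shiftLaw μ) n)) t from rfl,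
            ghat_conv, ghat_iter]
  rw [hG, geom_series_rel]

lemma shift_rel (μ : ℕ → ℝ≥0∞) (t : ℝ≥0∞) :
    t * ghat (shiftLaw μ) t + μ 0 = ghat μ t + t * μ 0 := by
  have hL : t * ghat (shiftLaw μ) t = ∑' k, shiftLaw μ k * t ^ (k + 1) := by
    rw [ghat, ← ENNReal.tsum_mul_left]
    exact tsum_congr fun k => by rw [pow_succ]; ring
  have hL2 : (∑' k, shiftLaw μ k * t ^ (k + 1))
      = (μ 0 + μ 1) * t + ∑' k, μ (k + 2) * t ^ (k + 2) := by
    rw [tsum_eq_zero_add' ENNReal.summable]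
    congr 1
    simp [shiftLaw]
  have hR : ghat μ t = μ 0 + (μ 1 * t + ∑' k, μ (k + 2) * t ^ (k + 2)) := by
    rw [ghat, tsum_eq_zero_add' ENNReal.summable]
    congr 1
    · simp
    · rw [tsum_eq_zero_add' ENNReal.summable]
      congr 1
      simp
  rw [hL, hL2, hR]; ring

lemma poisson_ghat {α : ℝ} (hα : 0 ≤ α) {s : ℝ} (hs : 0 ≤ s) :
    ghat (poissonPMF α) (ENNReal.ofReal s) = ENNReal.ofReal (Real.exp (α * (s - 1))) := by
  have hterm : ∀ k : ℕ, poissonPMF α k * (ENNReal.ofReal s) ^ k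
      = ENNReal.ofReal (Real.exp (-α) * ((α * s) ^ k / (Nat.factorial k))) := by
    intro k
    rw [poissonPMF, ← ENNReal.ofReal_pow hs, ← ENNReal.ofReal_mul (by positivity)]
    congr 1
    rw [mul_pow]; ring
  rw [ghat]
  calc (∑' k, poissonPMF α k * (ENNReal.ofReal s) ^ k)
      = ∑' k, ENNReal.ofReal (Real.exp (-α) * ((α * s) ^ k / (Nat.factorial k))) :=
        tsum_congr hterm
    _ = ENNReal.ofReal (∑' k : ℕ, Real.exp (-α) * ((α * s) ^ k / (Nat.factorial k))) :=
        (ENNReal.ofReal_tsum_of_nonneg (fun k => by positivity)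
          ((Real.summable_pow_div_factorial (α * s)).mul_left _)).symm
    _ = ENNReal.ofReal (Real.exp (α * (s - 1))) := by
        congr 1
        rw [tsum_mul_left]
        have hexp : (∑' k : ℕ, (α * s) ^ k / (Nat.factorial k)) = Real.exp (α * s) := by
          rw [Real.exp_eq_exp_ℝ, NormedSpace.exp_eq_tsum_div]
        rw [hexp, ← Real.exp_add]
        congr 1; ring

lemma mu_ne_top {μ : ℕ → ℝ≥0∞} (hsum : (∑' k, μ k) = 1) (k : ℕ) : μ k ≠ ⊤ := by
  have h := ENNReal.le_tsum (f := μ) k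
  rw [hsum] at h
  exact ne_top_of_le_ne_top ENNReal.one_ne_top h

lemma ghat_le_one {μ : ℕ → ℝ≥0∞} (hsum : (∑' k, μ k) = 1) {t : ℝ≥0∞} (ht : t ≤ 1) :
    ghat μ t ≤ 1 := by
  rw [ghat, ← hsum]
  refine Summable.tsum_le_tsum (fun k => ?_) ENNReal.summable ENNReal.summable
  calc μ k * t ^ k ≤ μ k * 1 := mul_le_mul_right (pow_le_one' ht k) _
    _ = μ k := mul_one _

lemma ghat_toReal {μ : ℕ → ℝ≥0∞} (hsum : (∑' k, μ k) = 1) {s : ℝ} (hs0 : 0 ≤ s) :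
    (ghat μ (ENNReal.ofReal s)).toReal = pgf μ s := by
  rw [ghat, ENNReal.tsum_toReal_eq (fun k => by
    exact ENNReal.mul_ne_top (mu_ne_top hsum k) (ENNReal.pow_ne_top ENNReal.ofReal_ne_top)), pgf]
  exact tsum_congr fun k => by
    rw [ENNReal.toReal_mul, ENNReal.toReal_pow, ENNReal.toReal_ofReal hs0]

/-- The quadratic equation satisfied by the pgf. -/
lemma pgf_quadratic {α : ℝ} (hα : 0 ≤ α) {μ : ℕ → ℝ≥0∞} (hμ : SatisfiesRDE α μ)
    {p : ℝ} (hp : p = (μ 0).toReal) {s : ℝ} (hs : s ∈ Set.Icc (0:ℝ) 1) :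
    pgf μ s ^ 2 - ((2 - p) * s + p) * pgf μ s + s * Real.exp (α * (s - 1)) = 0 := by
  obtain ⟨hs0, hs1⟩ := hs
  set t : ℝ≥0∞ := ENNReal.ofReal s with htdef
  have ht1 : t ≤ 1 := by
    rw [htdef, ← ENNReal.ofReal_one]
    exact ENNReal.ofReal_le_ofReal hs1
  have htne : t ≠ ⊤ := ENNReal.ofReal_ne_top
  set G := ghat μ t with hGdef
  set P := ghat (poissonPMF α) t with hPdef
  have hGne : G ≠ ⊤ := ne_top_of_le_ne_top ENNReal.one_ne_top (ghat_le_one hμ.1 ht1)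
  have hPne : P ≠ ⊤ := by rw [hPdef, htdef, poisson_ghat hα hs0]; exact ENNReal.ofReal_ne_top
  have hμ0ne : μ 0 ≠ ⊤ := mu_ne_top hμ.1 0
  -- key ENNReal identity
  have key : 2 * (t * G) + μ 0 * G = t * P + G * G + t * μ 0 * G := by
    have h1 : 2 * (t * G) + μ 0 * G = t * (2 * G) + μ 0 * G := by ring
    rw [h1, master_eq hμ t, ← hPdef, ← hGdef]
    have h2 : t * (P + G * ghat (shiftLaw μ) t) + μ 0 * G
        = t * P + (t * ghat (shiftLaw μ) t + μ 0) * G := by ring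
    rw [h2, shift_rel μ t, ← hGdef]
    ring
  -- convert to real numbers
  have keyR := congrArg ENNReal.toReal key
  rw [ENNReal.toReal_add (by finiteness) (by finiteness),
      ENNReal.toReal_add (ENNReal.add_ne_top.mpr ⟨by finiteness, by finiteness⟩) (by finiteness),
      ENNReal.toReal_add (by finiteness) (by finiteness)] at keyR
  simp only [ENNReal.toReal_mul, ENNReal.toReal_ofNat] at keyR
  have htR : t.toReal = s := by rw [htdef, ENNReal.toReal_ofReal hs0]
  have hGR : G.toReal = pgf μ s := ghat_toReal hμ.1 hs0
  have hPR : P.toReal = Real.exp (α * (s - 1)) := by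
    rw [hPdef, htdef, poisson_ghat hα hs0, ENNReal.toReal_ofReal (Real.exp_pos _).le]
  rw [htR, hGR, hPR, ← hp] at keyR
  linear_combination -keyR

lemma pgf_at_one {μ : ℕ → ℝ≥0∞} (hsum : (∑' k, μ k) = 1) : pgf μ 1 = 1 := by
  rw [pgf]
  simp only [one_pow, mul_one]
  rw [← ENNReal.tsum_toReal_eq (mu_ne_top hsum), hsum, ENNReal.toReal_one]

lemma pgf_at_zero (μ : ℕ → ℝ≥0∞) : pgf μ 0 = (μ 0).toReal := by
  rw [pgf, tsum_eq_single 0 (fun b hb => by simp [zero_pow hb])]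
  simp

lemma pgf_continuousOn {μ : ℕ → ℝ≥0∞} (hsum : (∑' k, μ k) = 1) :
    ContinuousOn (pgf μ) (Set.Icc (0:ℝ) 1) := by
  rw [continuousOn_iff_continuous_restrict]
  have hsummable : Summable (fun k => (μ k).toReal) :=
    ENNReal.summable_toReal (by rw [hsum]; exact ENNReal.one_ne_top)
  exact continuous_tsum
    (fun k => (continuous_const.mul ((continuous_subtype_val).pow k)))
    hsummable
    (fun k x => by
      have hx0 : (0:ℝ) ≤ (x : ℝ) := x.2.1
      have hx1 : (x : ℝ) ≤ 1 := x.2.2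
      rw [Real.norm_eq_abs, abs_mul, abs_of_nonneg ENNReal.toReal_nonneg,
        abs_of_nonneg (pow_nonneg hx0 k)]
      calc (μ k).toReal * (x:ℝ) ^ k ≤ (μ k).toReal * 1 :=
        mul_le_mul_of_nonneg_left (pow_le_one₀ hx0 hx1) ENNReal.toReal_nonneg
      _ = (μ k).toReal := mul_one _)

lemma p_pos {α : ℝ} {μ : ℕ → ℝ≥0∞} (hμ : SatisfiesRDE α μ) : 0 < (μ 0).toReal := by
  have hge : (1/2 : ℝ≥0∞) * ENNReal.ofReal (Real.exp (-α)) ≤ μ 0 := by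
    rw [hμ.2 0]
    have h0 := ENNReal.le_tsum
      (f := fun n => geomHalf n * convAdd (poissonPMF α) (iterConv (shiftLaw μ) n) 0) 0
    refine le_trans (le_of_eq ?_) h0
    rw [convAdd]
    simp [geomHalf, iterConv, poissonPMF, Finset.sum_range_one]
  have hpos : (0:ℝ≥0∞) < μ 0 := by
    refine lt_of_lt_of_le ?_ hge
    apply ENNReal.mul_pos
    · norm_num
    · simp [ENNReal.ofReal_pos, Real.exp_pos]
  exact ENNReal.toReal_pos hpos.ne' (mu_ne_top hμ.1 0)

lemma p_le_one {μ : ℕ → ℝ≥0∞} (hsum : (∑' k, μ k) = 1) : (μ 0).toReal ≤ 1 := by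
  have h := ENNReal.le_tsum (f := μ) 0
  rw [hsum] at h
  calc (μ 0).toReal ≤ (1:ℝ≥0∞).toReal := ENNReal.toReal_mono ENNReal.one_ne_top h
    _ = 1 := ENNReal.toReal_one

lemma exp_neg_le_quad {t : ℝ} (ht : 0 ≤ t) : Real.exp (-t) ≤ 1 - t + t ^ 2 / 2 := by
  have hQ : 1 + t + t ^ 2 / 2 ≤ Real.exp t := Real.quadratic_le_exp_of_nonneg ht
  have hQpos : (0:ℝ) < 1 + t + t ^ 2 / 2 := by positivity
  rw [Real.exp_neg]
  have h5 : (Real.exp t)⁻¹ ≤ (1 + t + t ^ 2 / 2)⁻¹ := inv_anti₀ hQpos hQ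
  refine h5.trans ?_
  have hprod : 1 ≤ (1 - t + t ^ 2 / 2) * (1 + t + t ^ 2 / 2) := by nlinarith [sq_nonneg (t ^ 2)]
  calc (1 + t + t ^ 2 / 2)⁻¹ = (1 + t + t ^ 2 / 2)⁻¹ * 1 := (mul_one _).symm
    _ ≤ (1 + t + t ^ 2 / 2)⁻¹ * ((1 - t + t ^ 2 / 2) * (1 + t + t ^ 2 / 2)) :=
        mul_le_mul_of_nonneg_left hprod (inv_nonneg.mpr hQpos.le)
    _ = 1 - t + t ^ 2 / 2 := by field_simp

lemma p_ge_one_sub_alpha (α p : ℝ) (hα0 : 0 < α) (hp0 : 0 < p) (hp1 : p ≤ 1)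
    (hD : ∀ s ∈ Set.Icc (0:ℝ) 1,
      0 ≤ ((2 - p) * s + p) ^ 2 - 4 * s * Real.exp (α * (s - 1))) :
    1 - α ≤ p := by
  by_contra hcon
  push_neg at hcon
  have hc0 : 0 < 1 - α - p := by linarith
  obtain ⟨u, hudef⟩ : ∃ u : ℝ, u = min (1 - α - p) 1 / 2 := ⟨_, rfl⟩
  have hmin : 0 < min (1 - α - p) 1 := lt_min hc0 one_pos
  have hu0 : 0 < u := by rw [hudef]; linarith
  have huc : u ≤ (1 - α - p) / 2 := by
    have h := min_le_left (1 - α - p) 1; rw [hudef]; linarith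
  have hu1 : u ≤ 1 / 2 := by
    have h := min_le_right (1 - α - p) 1; rw [hudef]; linarith
  have hsmem : (1 - u) ∈ Set.Icc (0:ℝ) 1 := ⟨by linarith, by linarith⟩
  have heq : α * ((1 - u) - 1) = -(α * u) := by ring
  have hE : 1 - α * u ≤ Real.exp (α * ((1 - u) - 1)) := by
    rw [heq]; linarith [Real.add_one_le_exp (-(α * u))]
  have hDnn := hD (1 - u) hsmem
  have h4s : 4 * (1 - u) * (1 - α * u) ≤ 4 * (1 - u) * Real.exp (α * ((1 - u) - 1)) :=
    mul_le_mul_of_nonneg_left hE (by linarith)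
  nlinarith [hDnn, h4s,
    mul_nonneg (mul_nonneg hp0.le (by linarith : (0:ℝ) ≤ 4 - p)) (sq_nonneg u),
    mul_nonneg (by linarith : (0:ℝ) ≤ (1 - α - p) / 2 - u) hu0.le,
    mul_nonneg hα0.le (sq_nonneg u), mul_pos hu0 hc0]

lemma disc_pos_aux (α p u : ℝ) (hα0 : 0 < α) (hquadα : α ^ 2 + 2 * α ≤ 1)
    (hpge : 1 - α ≤ p) (hp1 : p ≤ 1) (hu0 : 0 < u) (hu1 : u < 1) :
    0 < ((2 - p) * (1 - u) + p) ^ 2 - 4 * (1 - u) * Real.exp (α * ((1 - u) - 1)) := by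
  have hαlt1 : α < 1 := by nlinarith
  have heq : α * ((1 - u) - 1) = -(α * u) := by ring
  have hexp : Real.exp (α * ((1 - u) - 1)) ≤ 1 - α * u + (α * u) ^ 2 / 2 := by
    rw [heq]; exact exp_neg_le_quad (by positivity)
  have hb : 2 - (1 + α) * u ≤ (2 - p) * (1 - u) + p := by
    nlinarith [mul_nonneg (by linarith : (0:ℝ) ≤ p + α - 1) hu0.le]
  have hb0 : (0:ℝ) < 2 - (1 + α) * u := by
    nlinarith [mul_nonneg (by linarith : (0:ℝ) ≤ 1 + α) (by linarith : (0:ℝ) ≤ 1 - u)]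
  have h6 : (2 - (1 + α) * u) ^ 2 ≤ ((2 - p) * (1 - u) + p) ^ 2 :=
    pow_le_pow_left₀ hb0.le hb 2
  have h7 : 4 * (1 - u) * Real.exp (α * ((1 - u) - 1))
      ≤ 4 * (1 - u) * (1 - α * u + (α * u) ^ 2 / 2) :=
    mul_le_mul_of_nonneg_left hexp (by linarith)
  have h8 : (0:ℝ) < (2 - (1 + α) * u) ^ 2 - 4 * (1 - u) * (1 - α * u + (α * u) ^ 2 / 2) := by
    nlinarith [mul_nonneg (by linarith : (0:ℝ) ≤ 1 - 2 * α - α ^ 2) (sq_nonneg u),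
      mul_pos (mul_pos hα0 hα0) (mul_pos (mul_pos hu0 hu0) hu0)]
  linarith

/-- For 0 < α ≤ √2 − 1, G(s) = Q₊(s) for all s ∈ [0,1]. -/
theorem pgf_eq_Qplus_small_alpha
    (α : ℝ) (hα0 : 0 < α) (hα1 : α ≤ Real.sqrt 2 - 1)
    (μ : ℕ → ℝ≥0∞) (hμ : SatisfiesRDE α μ)
    (p : ℝ) (hp : p = (μ 0).toReal) :
    ∀ s ∈ Set.Icc (0 : ℝ) 1,
      pgf μ s = (1 / 2) * ((2 - p) * s + p +
        Real.sqrt (((2 - p) * s + p) ^ 2 - 4 * s * Real.exp (α * (s - 1)))) := by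
  have hp0 : 0 < p := hp ▸ p_pos hμ
  have hp1 : p ≤ 1 := hp ▸ p_le_one hμ.1
  have hsqrt2 : Real.sqrt 2 < 2 := by
    nlinarith [Real.sq_sqrt (by norm_num : (0:ℝ) ≤ 2), Real.sqrt_nonneg 2]
  have hquadα : α ^ 2 + 2 * α ≤ 1 := by
    have h1 : α + 1 ≤ Real.sqrt 2 := by linarith
    have h2 : (α + 1) ^ 2 ≤ (Real.sqrt 2) ^ 2 := pow_le_pow_left₀ (by linarith) h1 2
    rw [Real.sq_sqrt (by norm_num : (0:ℝ) ≤ 2)] at h2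
    nlinarith
  have hsq : ∀ s ∈ Set.Icc (0:ℝ) 1,
      (2 * pgf μ s - ((2 - p) * s + p)) ^ 2
        = ((2 - p) * s + p) ^ 2 - 4 * s * Real.exp (α * (s - 1)) := by
    intro s hs
    have hq := pgf_quadratic hα0.le hμ hp hs
    linear_combination 4 * hq
  have hDnn : ∀ s ∈ Set.Icc (0:ℝ) 1,
      0 ≤ ((2 - p) * s + p) ^ 2 - 4 * s * Real.exp (α * (s - 1)) := by
    intro s hs; rw [← hsq s hs]; exact sq_nonneg _
  have hpge : 1 - α ≤ p := p_ge_one_sub_alpha α p hα0 hp0 hp1 hDnn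
  have hDpos : ∀ s : ℝ, 0 < s → s < 1 →
      0 < ((2 - p) * s + p) ^ 2 - 4 * s * Real.exp (α * (s - 1)) := by
    intro s hs0 hs1
    have := disc_pos_aux α p (1 - s) hα0 hquadα hpge hp1 (by linarith) (by linarith)
    have hss : 1 - (1 - s) = s := by ring
    rw [hss] at this
    exact this
  have hfun_nonneg : ∀ s ∈ Set.Icc (0:ℝ) 1, 0 ≤ 2 * pgf μ s - ((2 - p) * s + p) := by
    intro s hs
    rcases eq_or_lt_of_le hs.2 with h1 | h1
    · rw [h1, pgf_at_one hμ.1]; linarith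
    · by_contra hneg
      push_neg at hneg
      have hcont : ContinuousOn (fun x => 2 * pgf μ x - ((2 - p) * x + p)) (Set.Icc 0 s) := by
        have hpg : ContinuousOn (pgf μ) (Set.Icc 0 s) :=
          (pgf_continuousOn hμ.1).mono (Set.Icc_subset_Icc le_rfl h1.le)
        exact (continuousOn_const.mul hpg).sub
          ((continuousOn_const.mul continuousOn_id).add continuousOn_const)
      have hIVT := intermediate_value_Icc' hs.1 hcont
      have h0mem : (0:ℝ) ∈ Set.Icc (2 * pgf μ s - ((2 - p) * s + p))
          (2 * pgf μ 0 - ((2 - p) * 0 + p)) := by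
        constructor
        · exact hneg.le
        · rw [pgf_at_zero, ← hp]; linarith
      obtain ⟨c, hc, hfc⟩ := hIVT h0mem
      have hcmem : c ∈ Set.Icc (0:ℝ) 1 := ⟨hc.1, le_trans hc.2 h1.le⟩
      have hDc : ((2 - p) * c + p) ^ 2 - 4 * c * Real.exp (α * (c - 1)) = 0 := by
        rw [← hsq c hcmem]
        simp only at hfc
        rw [hfc]; norm_num
      rcases eq_or_lt_of_le hc.1 with hc0 | hc0
      · rw [← hc0] at hDc; norm_num at hDc; nlinarith
      · have := hDpos c hc0 (lt_of_le_of_lt hc.2 h1)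
        linarith
  intro s hs
  have hroot : Real.sqrt (((2 - p) * s + p) ^ 2 - 4 * s * Real.exp (α * (s - 1)))
      = 2 * pgf μ s - ((2 - p) * s + p) := by
    rw [← hsq s hs]
    exact Real.sqrt_sq (hfun_nonneg s hs)
  rw [hroot]; ring
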